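/- For every n≥0, the number of 0-distant noncrossing partitions of [n] equals the number of Motzkin paths of length n, i.e. #NC_0(n) = Mot_n((1,1,1,...),(1,1,1,...)). -/

import Mathlib

/-- A step of a Motzkin path: up `(1,1)`, down `(1,-1)`, or horizontal `(1,0)`. -/
inductive MStep : Type
  | up : MStep
  | down : MStep
  | flat : MStep
  deriving DecidableEq

instance instFintypeMStep : Fintype MStep :=
  ⟨{MStep.up, MStep.down, MStep.flat}, by intro x; cases x <;> simp⟩

/-- The vertical displacement of a Motzkin step. -/
def MStep.val : MStep → ℤ
  | .up => 1
  | .down => -1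
  | .flat => 0

/-- The height of the path after its first `k` steps. -/
def mHeight (l : List MStep) (k : ℕ) : ℤ := ((l.take k).map MStep.val).sum

/-- A list of steps is a Motzkin path if it never goes below the x-axis and ends at height 0. -/
def IsMotzkin (l : List MStep) : Prop :=
  (∀ k : ℕ, 0 ≤ mHeight l k) ∧ mHeight l l.length = 0

/-- The weight of a Motzkin path w.r.t. `(b, lam)`: a factor `b i` for every horizontal step
of height `i` and a factor `lam i` for every down step of height `i` (the height of a step
being the `y`-coordinate of its ending point). -/
def mWeight (b lam : ℕ → ℚ) (l : List MStep) : ℚ :=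
  ∏ i ∈ Finset.range l.length,
    match l.getD i MStep.up with
    | .up => 1
    | .flat => b (mHeight l (i + 1)).toNat
    | .down => lam (mHeight l (i + 1)).toNat

open Classical in
/-- `Mot_n(b,lam)`: the sum of the weights of all Motzkin paths of length `n`. -/
noncomputable def motSum (n : ℕ) (b lam : ℕ → ℚ) : ℚ :=
  ∑ f : Fin n → MStep,
    if IsMotzkin (List.ofFn f) then mWeight b lam (List.ofFn f) else 0

/-- `(i, j)` is an arc of the set partition (given as an equivalence relation) `r`:
`i < j`, `i` and `j` lie in the same block, and no element strictly between `i` and `j`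
lies in that block. -/
def IsArc {n : ℕ} (r : Setoid (Fin n)) (i j : Fin n) : Prop :=
  i < j ∧ r i j ∧ ∀ k : Fin n, i < k → k < j → ¬ r i k

/-- A set partition of `[n]` (given as an equivalence relation on `Fin n`) is `k`-distant
noncrossing if it has no two arcs `(a, c)` and `(b, d)` with `a < b ≤ c < d` and `c - b ≥ k`. -/
def IsKDistantNC (k : ℕ) {n : ℕ} (r : Setoid (Fin n)) : Prop :=
  ∀ a b c d : Fin n, IsArc r a c → IsArc r b d →
    a < b → b ≤ c → c < d → (c : ℕ) - (b : ℕ) < k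

namespace NC0

open Finset

variable {n : ℕ}

def Hf (f : Fin n → MStep) (k : ℕ) : ℤ :=
  ∑ i : Fin n, if (i : ℕ) < k then (f i).val else 0

lemma Hf_zero (f : Fin n → MStep) : Hf f 0 = 0 := by simp [Hf]

lemma Hf_succ (f : Fin n → MStep) (k : ℕ) :
    Hf f (k + 1) = Hf f k + if h : k < n then (f ⟨k, h⟩).val else 0 := by
  by_cases h : k < n
  · rw [dif_pos h]
    have : Hf f (k+1) - Hf f k = (f ⟨k, h⟩).val := by
      rw [Hf, Hf, ← Finset.sum_sub_distrib]
      rw [Finset.sum_eq_single (⟨k, h⟩ : Fin n)]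
      · simp
      · intro b _ hb
        have : (b : ℕ) ≠ k := fun hc => hb (by ext; exact hc)
        by_cases hbk : (b : ℕ) < k
        · simp [hbk, Nat.lt_succ_of_lt hbk]
        · have : ¬ ((b:ℕ) < k + 1) := by omega
          simp [hbk, this]
      · simp
    linarith
  · rw [dif_neg h]
    have : Hf f (k+1) = Hf f k := by
      apply Finset.sum_congr rfl
      intro i _
      have h1 : (i : ℕ) < k := by have := i.isLt; omega
      simp [h1, Nat.lt_succ_of_lt h1]
    omega

lemma Hf_stab (f : Fin n → MStep) {k : ℕ} (hk : n ≤ k) : Hf f k = Hf f n := by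
  apply Finset.sum_congr rfl
  intro i _
  have h1 : (i : ℕ) < n := i.isLt
  simp [h1, lt_of_lt_of_le h1 hk]

lemma mHeight_ofFn (f : Fin n → MStep) (k : ℕ) :
    mHeight (List.ofFn f) k = Hf f k := by
  induction k with
  | zero => simp [mHeight, Hf_zero]
  | succ k ih =>
    rw [Hf_succ, ← ih, mHeight, mHeight, List.take_succ, List.map_append, List.sum_append]
    congr 1
    by_cases h : k < n
    · have : (List.ofFn f)[k]? = some (f ⟨k, h⟩) := by
        simp [List.getElem?_ofFn, h]
      simp [this, h]
    · have : (List.ofFn f)[k]? = none := by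
        rw [List.getElem?_eq_none]
        simp; omega
      simp [this, h]

lemma isMotzkin_iff (f : Fin n → MStep) :
    IsMotzkin (List.ofFn f) ↔ (∀ k, 0 ≤ Hf f k) ∧ Hf f n = 0 := by
  unfold IsMotzkin
  simp only [mHeight_ofFn, List.length_ofFn]

def Uset (f : Fin n → MStep) (k : ℕ) : Finset (Fin n) :=
  univ.filter fun i => (i : ℕ) < k ∧ f i = .up

def Dset (f : Fin n → MStep) (k : ℕ) : Finset (Fin n) :=
  univ.filter fun i => (i : ℕ) < k ∧ f i = .down

lemma Hf_eq_card (f : Fin n → MStep) (k : ℕ) :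
    Hf f k = ((Uset f k).card : ℤ) - ((Dset f k).card : ℤ) := by
  have h1 : Hf f k = ∑ i : Fin n,
      ((if (i:ℕ) < k ∧ f i = .up then (1:ℤ) else 0)
        - (if (i:ℕ) < k ∧ f i = .down then (1:ℤ) else 0)) := by
    apply Finset.sum_congr rfl
    intro i _
    by_cases h : (i:ℕ) < k
    · cases hfi : f i <;> simp [h, hfi, MStep.val]
    · simp [h]
  rw [h1, Finset.sum_sub_distrib]
  rw [Finset.sum_boole, Finset.sum_boole]
  simp [Uset, Dset]

def Uw (f : Fin n → MStep) (a m : ℕ) : Finset (Fin n) :=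
  univ.filter fun i => a ≤ (i : ℕ) ∧ (i : ℕ) < m ∧ f i = .up

def Dw (f : Fin n → MStep) (a m : ℕ) : Finset (Fin n) :=
  univ.filter fun i => a ≤ (i : ℕ) ∧ (i : ℕ) < m ∧ f i = .down

lemma Hf_window (f : Fin n → MStep) {a m : ℕ} (ham : a ≤ m) :
    Hf f m - Hf f a = ((Uw f a m).card : ℤ) - ((Dw f a m).card : ℤ) := by
  have hU : Uset f m = Uset f a ∪ Uw f a m := by
    ext i
    simp only [Uset, Uw, mem_filter, mem_univ, true_and, mem_union]
    constructor
    · rintro ⟨h1, h2⟩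
      rcases lt_or_ge (i:ℕ) a with h | h
      · exact Or.inl ⟨h, h2⟩
      · exact Or.inr ⟨h, h1, h2⟩
    · rintro (⟨h1, h2⟩ | ⟨h1, h2, h3⟩)
      · exact ⟨lt_of_lt_of_le h1 ham, h2⟩
      · exact ⟨h2, h3⟩
  have hD : Dset f m = Dset f a ∪ Dw f a m := by
    ext i
    simp only [Dset, Dw, mem_filter, mem_univ, true_and, mem_union]
    constructor
    · rintro ⟨h1, h2⟩
      rcases lt_or_ge (i:ℕ) a with h | h
      · exact Or.inl ⟨h, h2⟩
      · exact Or.inr ⟨h, h1, h2⟩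
    · rintro (⟨h1, h2⟩ | ⟨h1, h2, h3⟩)
      · exact ⟨lt_of_lt_of_le h1 ham, h2⟩
      · exact ⟨h2, h3⟩
  have hdU : Disjoint (Uset f a) (Uw f a m) := by
    rw [Finset.disjoint_left]
    intro i hi hi'
    simp only [Uset, Uw, mem_filter, mem_univ, true_and] at hi hi'
    omega
  have hdD : Disjoint (Dset f a) (Dw f a m) := by
    rw [Finset.disjoint_left]
    intro i hi hi'
    simp only [Dset, Dw, mem_filter, mem_univ, true_and] at hi hi'
    omega
  rw [Hf_eq_card, Hf_eq_card, hU, hD,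
    Finset.card_union_of_disjoint hdU, Finset.card_union_of_disjoint hdD]
  push_cast
  ring


/-- `a` and `b` are matched up/down steps of the path `f`. -/
def Paired (f : Fin n → MStep) (a b : Fin n) : Prop :=
  f a = .up ∧ f b = .down ∧ a < b ∧ Hf f a = Hf f ((b : ℕ) + 1) ∧
    ∀ m : ℕ, (a : ℕ) < m → m ≤ (b : ℕ) → Hf f a < Hf f m

lemma paired_unique_left (f : Fin n → MStep) {a a' b : Fin n}
    (h : Paired f a b) (h' : Paired f a' b) : a = a' := by
  by_contra hne
  rcases lt_or_gt_of_ne (fun hc => hne (Fin.ext hc) : (a:ℕ) ≠ (a':ℕ)) with hlt | hlt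
  · have := h.2.2.2.2 a' hlt (le_of_lt h'.2.2.1)
    have e1 := h.2.2.2.1
    have e2 := h'.2.2.2.1
    omega
  · have := h'.2.2.2.2 a hlt (le_of_lt h.2.2.1)
    have e1 := h.2.2.2.1
    have e2 := h'.2.2.2.1
    omega

lemma paired_unique_right (f : Fin n → MStep) {a b b' : Fin n}
    (h : Paired f a b) (h' : Paired f a b') : b = b' := by
  by_contra hne
  rcases lt_or_gt_of_ne (fun hc => hne (Fin.ext hc) : (b:ℕ) ≠ (b':ℕ)) with hlt | hlt
  · have := h'.2.2.2.2 ((b:ℕ)+1) (by have := h.2.2.1; omega) (by omega)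
    have e1 := h.2.2.2.1
    omega
  · have := h.2.2.2.2 ((b':ℕ)+1) (by have := h'.2.2.1; omega) (by omega)
    have e2 := h'.2.2.2.1
    omega

section Exist

variable {f : Fin n → MStep} (hpos : ∀ k, 0 ≤ Hf f k) (hend : Hf f n = 0)

include hpos in
/-- each down step has a matching up step -/
lemma exists_paired_left {b : Fin n} (hb : f b = .down) : ∃ a, Paired f a b := by
  classical
  have hstep : Hf f ((b:ℕ)+1) = Hf f (b:ℕ) + (f b).val := by
    rw [Hf_succ, dif_pos b.isLt]
  have hvb : (f b).val = -1 := by rw [hb]; rfl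
  have hHb : Hf f (b:ℕ) = Hf f ((b:ℕ)+1) + 1 := by omega
  have hh0 : 0 ≤ Hf f ((b:ℕ)+1) := hpos _
  have hP0 : Hf f 0 ≤ Hf f ((b:ℕ)+1) := by rw [Hf_zero]; exact hh0
  set a : ℕ := Nat.findGreatest (fun i => Hf f i ≤ Hf f ((b:ℕ)+1)) (b:ℕ) with ha
  have haP : Hf f a ≤ Hf f ((b:ℕ)+1) :=
    Nat.findGreatest_spec (P := fun i => Hf f i ≤ Hf f ((b:ℕ)+1)) (Nat.zero_le _) hP0
  have hab : a ≤ (b:ℕ) := Nat.findGreatest_le _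
  have hgt : ∀ m, a < m → m ≤ (b:ℕ) → Hf f ((b:ℕ)+1) < Hf f m := by
    intro m h1 h2
    have := Nat.findGreatest_is_greatest (P := fun i => Hf f i ≤ Hf f ((b:ℕ)+1)) h1 h2
    simpa using this
  have halt : a < (b:ℕ) := by
    rcases lt_or_eq_of_le hab with h | h
    · exact h
    · rw [h] at haP; omega
  have han : a < n := lt_trans halt b.isLt
  have hstepa : Hf f (a+1) = Hf f a + (f ⟨a, han⟩).val := by
    rw [Hf_succ, dif_pos han]
  have hsucc : Hf f ((b:ℕ)+1) < Hf f (a+1) := hgt (a+1) (by omega) (by omega)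
  have hvle : (f ⟨a, han⟩).val ≤ 1 := by cases hfa : f ⟨a, han⟩ <;> simp [MStep.val]
  have hHa : Hf f a = Hf f ((b:ℕ)+1) := by omega
  have hval : (f ⟨a, han⟩).val = 1 := by omega
  have hfa : f ⟨a, han⟩ = .up := by
    cases hfa : f ⟨a, han⟩ <;> rw [hfa] at hval <;> simp [MStep.val] at hval ⊢
  refine ⟨⟨a, han⟩, hfa, hb, halt, hHa, ?_⟩
  intro m h1 h2
  rw [hHa]
  exact hgt m h1 h2

include hpos hend in
/-- each up step has a matching down step -/
lemma exists_paired_right {a : Fin n} (ha : f a = .up) : ∃ b, Paired f a b := by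
  classical
  have hva : (f a).val = 1 := by rw [ha]; rfl
  have hex : ∃ m, (a:ℕ) < m ∧ Hf f m ≤ Hf f (a:ℕ) := ⟨n, a.isLt, by rw [hend]; exact hpos _⟩
  set m0 : ℕ := Nat.find hex with hm0
  have hPm0 : (a:ℕ) < m0 ∧ Hf f m0 ≤ Hf f (a:ℕ) := Nat.find_spec hex
  have hmin : ∀ m, (a:ℕ) < m → m < m0 → Hf f (a:ℕ) < Hf f m := by
    intro m h1 h2
    have := Nat.find_min hex h2
    push_neg at this
    exact this h1
  have hm0n : m0 ≤ n := Nat.find_le ⟨a.isLt, by rw [hend]; exact hpos _⟩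
  have hstepa : Hf f ((a:ℕ)+1) = Hf f (a:ℕ) + (f a).val := by
    rw [Hf_succ, dif_pos a.isLt]
  have h2 : (a:ℕ) + 1 < m0 := by
    rcases lt_or_ge ((a:ℕ)+1) m0 with hc | hc
    · exact hc
    · have hm : m0 = (a:ℕ)+1 := by omega
      have := hPm0.2
      rw [hm] at this
      omega
  obtain ⟨j, hjm⟩ : ∃ j, m0 = j + 1 := ⟨m0 - 1, by omega⟩
  have hjgt : Hf f (a:ℕ) < Hf f j := hmin j (by omega) (by omega)
  have hjn : j < n := by omega
  have hstepj : Hf f (j+1) = Hf f j + (f ⟨j, hjn⟩).val := by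
    rw [Hf_succ, dif_pos hjn]
  have hvge : -1 ≤ (f ⟨j, hjn⟩).val := by cases hfj : f ⟨j, hjn⟩ <;> simp [MStep.val]
  have hm0le : Hf f (j+1) ≤ Hf f (a:ℕ) := by rw [← hjm]; exact hPm0.2
  have hval : (f ⟨j, hjn⟩).val = -1 := by omega
  have hfj : f ⟨j, hjn⟩ = .down := by
    cases hfj : f ⟨j, hjn⟩ <;> rw [hfj] at hval <;> simp [MStep.val] at hval ⊢
  refine ⟨⟨j, hjn⟩, ha, hfj, ?_, ?_, ?_⟩
  · show (a:ℕ) < j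
    omega
  · show Hf f (a:ℕ) = Hf f (j+1)
    omega
  · intro m hm1 hm2
    simp only [show ((⟨j, hjn⟩ : Fin n) : ℕ) = j from rfl] at hm2
    exact hmin m hm1 (by omega)

end Exist
/-- The partition associated to a path. -/
def pathSetoid (f : Fin n → MStep) : Setoid (Fin n) where
  r x y := x = y ∨ Paired f x y ∨ Paired f y x
  iseqv := by
    constructor
    · intro x; exact Or.inl rfl
    · rintro x y (rfl | h | h)
      · exact Or.inl rfl
      · exact Or.inr (Or.inr h)
      · exact Or.inr (Or.inl h)
    · rintro x y z (rfl | h | h) (rfl | h' | h')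
      · exact Or.inl rfl
      · exact Or.inr (Or.inl h')
      · exact Or.inr (Or.inr h')
      · exact Or.inr (Or.inl h)
      · exact absurd h'.1 (by rw [h.2.1]; simp)
      · exact Or.inl (paired_unique_left f h h')
      · exact Or.inr (Or.inr h)
      · exact Or.inl (paired_unique_right f h h')
      · exact absurd h'.2.1 (by rw [h.1]; simp)

lemma pathSetoid_rel (f : Fin n → MStep) (x y : Fin n) :
    (pathSetoid f) x y ↔ x = y ∨ Paired f x y ∨ Paired f y x := Iff.rfl

lemma isArc_pathSetoid (f : Fin n → MStep) (i j : Fin n) :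
    IsArc (pathSetoid f) i j ↔ Paired f i j := by
  constructor
  · rintro ⟨hij, hr, _⟩
    rcases hr with rfl | h | h
    · exact absurd hij (lt_irrefl _)
    · exact h
    · exact absurd (lt_trans hij h.2.2.1) (lt_irrefl _)
  · intro h
    refine ⟨h.2.2.1, Or.inr (Or.inl h), ?_⟩
    rintro k h1 h2 (rfl | hk | hk)
    · exact absurd h1 (lt_irrefl _)
    · exact absurd h2 (by rw [paired_unique_right f h hk]; exact lt_irrefl _)
    · exact absurd h.1 (by rw [hk.2.1]; simp)

lemma pathSetoid_nc (f : Fin n → MStep) : IsKDistantNC 0 (pathSetoid f) := by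
  intro a b c d hac hbd hab hbc hcd
  exfalso
  rw [isArc_pathSetoid] at hac hbd
  have hbc' : (b:ℕ) < (c:ℕ) := by
    rcases lt_or_eq_of_le hbc with h | h
    · exact h
    · exact absurd hbd.1 (by rw [h, hac.2.1]; simp)
  have h1 : Hf f (b:ℕ) > Hf f (a:ℕ) := hac.2.2.2.2 (b:ℕ) hab (le_of_lt hbc')
  have h2 : Hf f ((c:ℕ)+1) > Hf f (b:ℕ) := hbd.2.2.2.2 ((c:ℕ)+1) (by omega) (by have := hcd; omega)
  have h3 := hac.2.2.2.1
  omega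

section FromSetoid

variable (r : Setoid (Fin n))

/-- A pair of the partition. -/
def P2 (a b : Fin n) : Prop := a < b ∧ r a b

variable (hr : IsKDistantNC 0 r)

include hr in
lemma no_triple {p q s : Fin n} (hpq : p < q) (hqs : q < s) (h1 : r p q) (h2 : r p s) :
    False := by
  classical
  set T := univ.filter (fun k => p < k ∧ r p k) with hT
  have hqT : q ∈ T := by simp [hT, hpq, h1]
  have hne : T.Nonempty := ⟨q, hqT⟩
  set q' := T.min' hne with hq'
  have hmem : p < q' ∧ r p q' := (Finset.mem_filter.mp (T.min'_mem hne)).2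
  have hq'le : q' ≤ q := T.min'_le q hqT
  set S := univ.filter (fun k => q' < k ∧ r p k) with hS
  have hsS : s ∈ S := by
    simp only [hS, mem_filter, mem_univ, true_and]
    exact ⟨lt_of_le_of_lt hq'le hqs, h2⟩
  have hneS : S.Nonempty := ⟨s, hsS⟩
  set s' := S.min' hneS with hs'
  have hmemS : q' < s' ∧ r p s' := (Finset.mem_filter.mp (S.min'_mem hneS)).2
  have arc1 : IsArc r p q' := by
    refine ⟨hmem.1, hmem.2, ?_⟩
    intro k hk1 hk2 hk3
    have hkT : k ∈ T := by simp [hT, hk1, hk3]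
    exact absurd (T.min'_le k hkT) (not_le.mpr hk2)
  have arc2 : IsArc r q' s' := by
    refine ⟨hmemS.1, r.iseqv.trans (r.iseqv.symm hmem.2) hmemS.2, ?_⟩
    intro k hk1 hk2 hk3
    have hpk : r p k := r.iseqv.trans hmem.2 hk3
    have hkS : k ∈ S := by simp [hS, hk1, hpk]
    exact absurd (S.min'_le k hkS) (not_le.mpr hk2)
  have := hr p q' q' s' arc1 arc2 hmem.1 (le_refl _) hmemS.1
  omega

include hr in
lemma partner_unique {x y z : Fin n} (hy : r x y) (hz : r x z) (hxy : x ≠ y)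
    (hxz : x ≠ z) : y = z := by
  by_contra hne
  wlog hyz : y < z generalizing y z
  · exact this hz hy hxz hxy (Ne.symm hne) (by omega)
  rcases lt_trichotomy x y with h1 | h1 | h1
  · exact no_triple r hr h1 hyz hy hz
  · exact hxy h1
  · rcases lt_trichotomy x z with h2 | h2 | h2
    · exact no_triple r hr h1 h2 (r.iseqv.symm hy) (r.iseqv.trans (r.iseqv.symm hy) hz)
    · exact hxz h2
    · exact no_triple r hr hyz h2 (r.iseqv.trans (r.iseqv.symm hy) hz) (r.iseqv.symm hy)

include hr in
lemma p2_isArc {a b : Fin n} (h : P2 r a b) : IsArc r a b := by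
  refine ⟨h.1, h.2, ?_⟩
  intro k hk1 hk2 hk
  have : k = b := partner_unique r hr hk h.2 (ne_of_lt hk1) (ne_of_lt h.1)
  exact absurd hk2 (by rw [this]; exact lt_irrefl _)

end FromSetoid

open Classical in
/-- The path associated to a partition. -/
noncomputable def stepOf (r : Setoid (Fin n)) (i : Fin n) : MStep :=
  if ∃ j, i < j ∧ r i j then .up else if ∃ j, j < i ∧ r i j then .down else .flat

lemma stepOf_up_iff (r : Setoid (Fin n)) (i : Fin n) :
    stepOf r i = .up ↔ ∃ j, P2 r i j := by
  unfold stepOf P2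
  split_ifs with h1 h2 <;> simp_all

section FromSetoid2

variable (r : Setoid (Fin n)) (hr : IsKDistantNC 0 r)

include hr in
lemma stepOf_down_iff (i : Fin n) :
    stepOf r i = .down ↔ ∃ a, P2 r a i := by
  unfold stepOf
  split_ifs with h1 h2
  · simp only [reduceCtorEq, false_iff]
    rintro ⟨a, ha1, ha2⟩
    obtain ⟨j, hj1, hj2⟩ := h1
    have : j = a := partner_unique r hr hj2 (r.iseqv.symm ha2) (ne_of_lt hj1) (ne_of_gt ha1)
    omega
  · simp only [true_iff]
    obtain ⟨j, hj1, hj2⟩ := h2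
    exact ⟨j, hj1, r.iseqv.symm hj2⟩
  · simp only [reduceCtorEq, false_iff]
    rintro ⟨a, ha1, ha2⟩
    exact h2 ⟨a, ha1, r.iseqv.symm ha2⟩

open Classical in
/-- the partner of an element, or itself if single -/
noncomputable def mate (i : Fin n) : Fin n :=
  if h : ∃ j, j ≠ i ∧ r i j then h.choose else i

include hr in
lemma mate_eq {a b : Fin n} (h : P2 r a b) : mate r a = b ∧ mate r b = a := by
  constructor
  · have hex : ∃ j, j ≠ a ∧ r a j := ⟨b, ne_of_gt h.1, h.2⟩
    rw [mate, dif_pos hex]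
    exact partner_unique r hr hex.choose_spec.2 h.2 (Ne.symm hex.choose_spec.1) (ne_of_lt h.1)
  · have hex : ∃ j, j ≠ b ∧ r b j := ⟨a, ne_of_lt h.1, r.iseqv.symm h.2⟩
    rw [mate, dif_pos hex]
    exact partner_unique r hr hex.choose_spec.2 (r.iseqv.symm h.2)
      (Ne.symm hex.choose_spec.1) (ne_of_gt h.1)

include hr in
lemma up_p2 {i : Fin n} (hi : stepOf r i = .up) : P2 r i (mate r i) := by
  obtain ⟨b, hb⟩ := (stepOf_up_iff r i).mp hi
  rw [(mate_eq r hr hb).1]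
  exact hb

include hr in
lemma down_p2 {i : Fin n} (hi : stepOf r i = .down) : P2 r (mate r i) i := by
  obtain ⟨a, ha⟩ := (stepOf_down_iff r hr i).mp hi
  rw [(mate_eq r hr ha).2]
  exact ha

include hr in
lemma card_D_le_U (k : ℕ) : (Dset (stepOf r) k).card ≤ (Uset (stepOf r) k).card := by
  apply Finset.card_le_card_of_injOn (mate r)
  · intro d hd
    rw [Dset, mem_coe, mem_filter] at hd
    obtain ⟨-, hdk, hdd⟩ := hd
    have hp := down_p2 r hr hdd
    rw [mem_coe, Uset, mem_filter]
    refine ⟨mem_univ _, lt_trans (show ((mate r d : Fin n) : ℕ) < (d : ℕ) from hp.1) hdk, ?_⟩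
    rw [stepOf_up_iff]
    exact ⟨d, hp⟩
  · intro d1 h1 d2 h2 he
    simp only [coe_filter, Set.mem_setOf_eq, Dset, mem_univ, true_and] at h1 h2
    have hp1 := down_p2 r hr h1.2
    have hp2 := down_p2 r hr h2.2
    rw [he] at hp1
    exact partner_unique r hr hp1.2 hp2.2 (ne_of_lt hp1.1) (ne_of_lt hp2.1)

include hr in
lemma card_U_eq_D : (Uset (stepOf r) n).card = (Dset (stepOf r) n).card := by
  apply le_antisymm
  · apply Finset.card_le_card_of_injOn (mate r)
    · intro u hu
      rw [Uset, mem_coe, mem_filter] at hu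
      obtain ⟨-, -, huu⟩ := hu
      have hp := up_p2 r hr huu
      rw [mem_coe, Dset, mem_filter]
      refine ⟨mem_univ _, (mate r u).isLt, ?_⟩
      rw [stepOf_down_iff r hr]
      exact ⟨u, hp⟩
    · intro u1 h1 u2 h2 he
      simp only [coe_filter, Set.mem_setOf_eq, Uset, mem_univ, true_and] at h1 h2
      have hp1 := up_p2 r hr h1.2
      have hp2 := up_p2 r hr h2.2
      rw [he] at hp1
      exact partner_unique r hr (r.iseqv.symm hp1.2) (r.iseqv.symm hp2.2)
        (ne_of_gt hp1.1) (ne_of_gt hp2.1)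
  · exact card_D_le_U r hr n

include hr in
lemma isMotzkin_stepOf : IsMotzkin (List.ofFn (stepOf r)) := by
  rw [isMotzkin_iff]
  constructor
  · intro k
    rw [Hf_eq_card]
    have := card_D_le_U r hr k
    omega
  · rw [Hf_eq_card, card_U_eq_D r hr]
    ring

variable {a b : Fin n}

include hr in
lemma stepOf_a_up (hab : P2 r a b) : stepOf r a = .up :=
  (stepOf_up_iff r a).mpr ⟨b, hab⟩

include hr in
lemma stepOf_b_down (hab : P2 r a b) : stepOf r b = .down :=
  (stepOf_down_iff r hr b).mpr ⟨a, hab⟩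

include hr in
lemma card_Dw_lt_Uw (hab : P2 r a b) {m : ℕ} (h1 : (a : ℕ) < m) (h2 : m ≤ (b : ℕ)) :
    (Dw (stepOf r) (a : ℕ) m).card < (Uw (stepOf r) (a : ℕ) m).card := by
  have haU : a ∈ Uw (stepOf r) (a : ℕ) m := by
    rw [Uw, mem_filter]
    exact ⟨mem_univ _, le_refl _, h1, stepOf_a_up r hr hab⟩
  have hcard : (Dw (stepOf r) (a : ℕ) m).card ≤ ((Uw (stepOf r) (a : ℕ) m).erase a).card := by
    apply Finset.card_le_card_of_injOn (mate r)
    · intro d hd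
      rw [Dw, mem_coe, mem_filter] at hd
      obtain ⟨-, had, hdm, hdd⟩ := hd
      have hp := down_p2 r hr hdd
      have hda : d ≠ a := by
        intro hc
        rw [hc] at hdd
        rw [stepOf_a_up r hr hab] at hdd
        exact absurd hdd (by simp)
      have had' : (a : ℕ) < (d : ℕ) := lt_of_le_of_ne had (by
        intro hc
        exact hda (Fin.ext hc.symm))
      have hdb : d < b := by
        rw [Fin.lt_def]; omega
      have hax : (a : ℕ) ≤ ((mate r d : Fin n) : ℕ) := by
        by_contra hc
        push_neg at hc
        have hxa : (mate r d) < a := by rw [Fin.lt_def]; exact hc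
        have := hr (mate r d) a d b (p2_isArc r hr hp) (p2_isArc r hr hab) hxa
          (le_of_lt (by rw [Fin.lt_def]; omega)) hdb
        omega
      have hxa : mate r d ≠ a := by
        intro hc
        rw [hc] at hp
        have : d = b := partner_unique r hr hp.2 hab.2 (ne_of_lt hp.1) (ne_of_lt hab.1)
        rw [this] at hdm
        omega
      rw [mem_coe, mem_erase]
      refine ⟨hxa, ?_⟩
      rw [Uw, mem_filter]
      have hxd := hp.1
      rw [Fin.lt_def] at hxd
      refine ⟨mem_univ _, hax, by omega, (stepOf_up_iff r _).mpr ⟨d, hp⟩⟩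
    · intro d1 hd1 d2 hd2 he
      simp only [coe_filter, Set.mem_setOf_eq, Dw, mem_univ, true_and] at hd1 hd2
      have hp1 := down_p2 r hr hd1.2.2
      have hp2 := down_p2 r hr hd2.2.2
      rw [he] at hp1
      exact partner_unique r hr hp1.2 hp2.2 (ne_of_lt hp1.1) (ne_of_lt hp2.1)
  have := Finset.card_erase_of_mem haU
  have hpos : 0 < (Uw (stepOf r) (a : ℕ) m).card := Finset.card_pos.mpr ⟨a, haU⟩
  omega

include hr in
lemma card_Uw_eq_Dw (hab : P2 r a b) :
    (Uw (stepOf r) (a : ℕ) ((b : ℕ) + 1)).card = (Dw (stepOf r) (a : ℕ) ((b : ℕ) + 1)).card := by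
  apply le_antisymm
  · apply Finset.card_le_card_of_injOn (mate r)
    · intro u hu
      rw [Uw, mem_coe, mem_filter] at hu
      obtain ⟨-, hau, hub, huu⟩ := hu
      have hp := up_p2 r hr huu
      have hux := hp.1
      rw [Fin.lt_def] at hux
      rw [mem_coe, Dw, mem_filter]
      refine ⟨mem_univ _, by omega, ?_, (stepOf_down_iff r hr _).mpr ⟨u, hp⟩⟩
      -- mate u ≤ b
      rcases eq_or_lt_of_le hau with h | h
      · have hua : u = a := Fin.ext h.symm
        have hmu : mate r u = b := by rw [hua]; exact (mate_eq r hr hab).1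
        rw [hmu]
        omega
      · by_contra hc
        push_neg at hc
        have hbx : b < mate r u := by rw [Fin.lt_def]; omega
        have hau' : a < u := by rw [Fin.lt_def]; exact h
        have hub' : u ≤ b := by rw [Fin.le_def]; omega
        have := hr a u b (mate r u) (p2_isArc r hr hab) (p2_isArc r hr hp) hau' hub' hbx
        omega
    · intro u1 h1 u2 h2 he
      simp only [coe_filter, Set.mem_setOf_eq, Uw, mem_univ, true_and] at h1 h2
      have hp1 := up_p2 r hr h1.2.2
      have hp2 := up_p2 r hr h2.2.2
      rw [he] at hp1
      exact partner_unique r hr (r.iseqv.symm hp1.2) (r.iseqv.symm hp2.2)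
        (ne_of_gt hp1.1) (ne_of_gt hp2.1)
  · apply Finset.card_le_card_of_injOn (mate r)
    · intro d hd
      rw [Dw, mem_coe, mem_filter] at hd
      obtain ⟨-, had, hdb, hdd⟩ := hd
      have hp := down_p2 r hr hdd
      have hxd := hp.1
      rw [Fin.lt_def] at hxd
      rw [mem_coe, Uw, mem_filter]
      refine ⟨mem_univ _, ?_, by omega, (stepOf_up_iff r _).mpr ⟨d, hp⟩⟩
      -- a ≤ mate d
      rcases eq_or_lt_of_le (show (d : ℕ) ≤ (b : ℕ) by omega) with h | h
      · have hdb' : d = b := Fin.ext h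
        rw [hdb'] at hp
        have : mate r d = a := by
          rw [hdb']
          exact (mate_eq r hr hab).2
        rw [this]
      · by_contra hc
        push_neg at hc
        have hda : d ≠ a := by
          intro hcc
          rw [hcc] at hdd
          rw [stepOf_a_up r hr hab] at hdd
          exact absurd hdd (by simp)
        have had' : (a : ℕ) < (d : ℕ) := lt_of_le_of_ne had (fun hcc => hda (Fin.ext hcc.symm))
        have hxa : mate r d < a := by rw [Fin.lt_def]; omega
        have := hr (mate r d) a d b (p2_isArc r hr hp) (p2_isArc r hr hab) hxa
          (le_of_lt (by rw [Fin.lt_def]; omega)) (by rw [Fin.lt_def]; omega)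
        omega
    · intro d1 hd1 d2 hd2 he
      simp only [coe_filter, Set.mem_setOf_eq, Dw, mem_univ, true_and] at hd1 hd2
      have hp1 := down_p2 r hr hd1.2.2
      have hp2 := down_p2 r hr hd2.2.2
      rw [he] at hp1
      exact partner_unique r hr hp1.2 hp2.2 (ne_of_lt hp1.1) (ne_of_lt hp2.1)

include hr in
lemma p2_paired (hab : P2 r a b) : Paired (stepOf r) a b := by
  refine ⟨stepOf_a_up r hr hab, stepOf_b_down r hr hab, hab.1, ?_, ?_⟩
  · have hw := Hf_window (stepOf r) (show (a : ℕ) ≤ (b : ℕ) + 1 by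
      have := hab.1; rw [Fin.lt_def] at this; omega)
    rw [card_Uw_eq_Dw r hr hab] at hw
    omega
  · intro m hm1 hm2
    have hw := Hf_window (stepOf r) (show (a : ℕ) ≤ m by omega)
    have := card_Dw_lt_Uw r hr hab hm1 hm2
    omega

end FromSetoid2

section Inverse

variable {f : Fin n → MStep} (hpos : ∀ k, 0 ≤ Hf f k) (hend : Hf f n = 0)

include hpos hend in
lemma condUp_iff (i : Fin n) :
    (∃ j, i < j ∧ (pathSetoid f) i j) ↔ f i = .up := by
  constructor
  · rintro ⟨j, hij, (rfl | h | h)⟩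
    · exact absurd hij (lt_irrefl _)
    · exact h.1
    · exact absurd (lt_trans hij h.2.2.1) (lt_irrefl _)
  · intro h
    obtain ⟨j, hj⟩ := exists_paired_right hpos hend h
    exact ⟨j, hj.2.2.1, Or.inr (Or.inl hj)⟩

include hpos in
lemma condDown_iff (i : Fin n) :
    (∃ j, j < i ∧ (pathSetoid f) i j) ↔ f i = .down := by
  constructor
  · rintro ⟨j, hij, (rfl | h | h)⟩
    · exact absurd hij (lt_irrefl _)
    · exact absurd (lt_trans hij h.2.2.1) (lt_irrefl _)
    · exact h.2.1
  · intro h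
    obtain ⟨a, ha⟩ := exists_paired_left hpos h
    exact ⟨a, ha.2.2.1, Or.inr (Or.inr ha)⟩

include hpos hend in
lemma stepOf_pathSetoid : stepOf (pathSetoid f) = f := by
  funext i
  rw [stepOf]
  cases hfi : f i
  · rw [if_pos ((condUp_iff hpos hend i).mpr hfi)]
  · rw [if_neg, if_pos ((condDown_iff hpos i).mpr hfi)]
    intro hc
    rw [(condUp_iff hpos hend i).mp hc] at hfi
    exact MStep.noConfusion hfi
  · rw [if_neg, if_neg]
    · intro hc
      rw [(condDown_iff hpos i).mp hc] at hfi
      exact MStep.noConfusion hfi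
    · intro hc
      rw [(condUp_iff hpos hend i).mp hc] at hfi
      exact MStep.noConfusion hfi

end Inverse

lemma pathSetoid_stepOf (r : Setoid (Fin n)) (hr : IsKDistantNC 0 r) :
    pathSetoid (stepOf r) = r := by
  apply Setoid.ext
  intro x y
  constructor
  · rintro (rfl | h | h)
    · exact r.iseqv.refl x
    · have hx := (stepOf_up_iff r x).mp h.1
      obtain ⟨b, hb⟩ := hx
      have := p2_paired r hr hb
      rw [← paired_unique_right _ this h]
      exact hb.2
    · have hy := (stepOf_up_iff r y).mp h.1
      obtain ⟨b, hb⟩ := hy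
      have := p2_paired r hr hb
      rw [← paired_unique_right _ this h]
      exact r.iseqv.symm hb.2
  · intro h
    rcases lt_trichotomy x y with h1 | h1 | h1
    · exact Or.inr (Or.inl (p2_paired r hr ⟨h1, h⟩))
    · exact Or.inl h1
    · exact Or.inr (Or.inr (p2_paired r hr ⟨h1, r.iseqv.symm h⟩))

/-- The bijection between Motzkin paths and 0-distant noncrossing partitions. -/
noncomputable def theEquiv (n : ℕ) :
    {f : Fin n → MStep // IsMotzkin (List.ofFn f)} ≃
      {r : Setoid (Fin n) // IsKDistantNC 0 r} where
  toFun f := ⟨pathSetoid f.1, pathSetoid_nc f.1⟩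
  invFun r := ⟨stepOf r.1, isMotzkin_stepOf r.1 r.2⟩
  left_inv := fun ⟨f, hf⟩ => by
    have h := (isMotzkin_iff f).mp hf
    exact Subtype.ext (stepOf_pathSetoid h.1 h.2)
  right_inv := fun ⟨r, hr⟩ => Subtype.ext (pathSetoid_stepOf r hr)

lemma mWeight_one (l : List MStep) : mWeight (fun _ => 1) (fun _ => 1) l = 1 := by
  apply Finset.prod_eq_one
  intro i _
  cases l.getD i MStep.up <;> rfl

end NC0

theorem nc0_eq_motzkin_count' (n : ℕ) :
    (Nat.card {r : Setoid (Fin n) // IsKDistantNC 0 r} : ℚ) =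
      motSum n (fun _ => 1) (fun _ => 1) := by
  classical
  have h1 : Nat.card {r : Setoid (Fin n) // IsKDistantNC 0 r}
      = Nat.card {f : Fin n → MStep // IsMotzkin (List.ofFn f)} :=
    Nat.card_congr (NC0.theEquiv n).symm
  have h2 : motSum n (fun _ => 1) (fun _ => 1)
      = ∑ f : Fin n → MStep, if IsMotzkin (List.ofFn f) then (1 : ℚ) else 0 := by
    rw [motSum]
    apply Finset.sum_congr rfl
    intro f _
    split_ifs with h
    · exact NC0.mWeight_one _
    · rfl
  rw [h1, h2, Finset.sum_boole, Nat.card_eq_fintype_card, Fintype.card_subtype]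

/-- `#NC_0(n)` equals the number of Motzkin paths of length `n`, i.e.
`Mot_n((1,1,…),(1,1,…))`. -/
theorem nc0_eq_motzkin_count (n : ℕ) :
    (Nat.card {r : Setoid (Fin n) // IsKDistantNC 0 r} : ℚ) =
      motSum n (fun _ => 1) (fun _ => 1) := by
  exact nc0_eq_motzkin_count' n
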